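/- Let g(x) = 2x(1−x)/(1−2x+2x^2)^2 on (0,1) and D(x) = (x^4 + (1−x)^4)/6. Then ∫_0^1 D(x) g(x) dx = π/12 − 2/9. -/

import Mathlib

open Real

/-- Stationary density of the status-quo reference rule. -/
noncomputable def statDens (x : ℝ) : ℝ := 2 * x * (1 - x) / (1 - 2*x + 2*x^2)^2

/-- Conditional expected squared increment at state `x`. -/
noncomputable def condQV (x : ℝ) : ℝ := (x^4 + (1 - x)^4) / 6

lemma q_pos (x : ℝ) : 0 < 1 - 2*x + 2*x^2 := by nlinarith [sq_nonneg (2*x - 1)]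

noncomputable def antider (x : ℝ) : ℝ :=
  (-(2*x^3/3) + x^2 - 2*x + 2*Real.arctan (2*x-1) - (x - 1/2)/(1 - 2*x + 2*x^2)) / 12

lemma antider_deriv (x : ℝ) : HasDerivAt antider (condQV x * statDens x) x := by
  have hq : (1 - 2*x + 2*x^2) ≠ 0 := (q_pos x).ne'
  have ha : (1 + (2*x-1)^2) ≠ 0 := by positivity
  have hA : HasDerivAt (fun y : ℝ => 2*y - 1) 2 x := by
    simpa using ((hasDerivAt_id x).const_mul 2).sub_const 1
  have harc : HasDerivAt (fun y => Real.arctan (2*y-1)) (1/(1+(2*x-1)^2) * 2) x :=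
    (Real.hasDerivAt_arctan _).comp x hA
  have hcube : HasDerivAt (fun y : ℝ => 2*y^3/3) (2*(3*x^2)/3) x := by
    simpa [mul_comm, mul_assoc, mul_div_assoc] using
      ((hasDerivAt_pow 3 x).const_mul 2).div_const 3
  have hsq : HasDerivAt (fun y : ℝ => y^2) (2*x) x := by
    simpa using hasDerivAt_pow 2 x
  have hlin : HasDerivAt (fun y : ℝ => 2*y) 2 x := by
    simpa using (hasDerivAt_id x).const_mul 2
  have hnum : HasDerivAt (fun y : ℝ => y - 1/2) 1 x := (hasDerivAt_id x).sub_const _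
  have hden : HasDerivAt (fun y : ℝ => 1 - 2*y + 2*y^2) (0 - 2 + 2*(2*x)) x := by
    exact ((hasDerivAt_const x 1).sub hlin).add (hsq.const_mul 2)
  have hfrac := hnum.div hden hq
  have H := ((((hcube.neg.add hsq).sub hlin).add (harc.const_mul 2)).sub hfrac).div_const 12
  convert H using 1
  · rfl
  · rfl
  · rfl
  unfold condQV statDens
  have h2 : (1 + (2*x-1)^2) = 2*(1 - 2*x + 2*x^2) := by ring
  rw [h2]
  field_simp [show (1 - x*2 + x^2*2 : ℝ) ≠ 0 by have := q_pos x; intro h; linarith]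
  ring

theorem stmt_4 :
    (∫ x in (0:ℝ)..1, condQV x * statDens x) = π/12 - 2/9 := by
  have hcont : Continuous fun x => condQV x * statDens x := by
    apply Continuous.mul
    · unfold condQV; fun_prop
    · unfold statDens
      apply Continuous.div (by fun_prop) (by fun_prop)
      intro x
      exact pow_ne_zero 2 (q_pos x).ne'
  rw [intervalIntegral.integral_eq_sub_of_hasDerivAt
      (fun x _ => antider_deriv x) (hcont.intervalIntegrable 0 1)]
  unfold antider
  rw [show (2*(1:ℝ)-1) = 1 by ring, show (2*(0:ℝ)-1) = -1 by ring,
    Real.arctan_one, Real.arctan_neg, Real.arctan_one]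
  norm_num
  ring
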